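/- Let m ≥ 1 be an integer. Assume that for every invertible measure-preserving system (Ω, G, ν, S) on a probability space, all bounded measurable G1, G2 : Ω → ℂ, and all integers a, b, there exists a set of full ν-measure on which the averages (1/N) Σ_{n=1}^{N} G1(S^{an}ω) G2(S^{bn}ω) e^{2πi q(n)} converge for every polynomial q with real coefficients of degree at most m as N → ∞. Then for every invertible measure-preserving system (X, F, μ, T) on a probability space, all f1, f2 ∈ L^∞(μ), all integers a ≠ b, and every t ∈ ℝ, the averages (1/N) Σ_{n=1}^{N} f1(T^{an}x) f2(T^{bn}x) e^{2πi n^{m+1} t} converge for μ-almost every x as N → ∞. -/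

import Mathlib

open MeasureTheory Filter Finset

universe u

open Polynomial

instance wwFactZeroLtOne : Fact ((0:ℝ) < 1) := ⟨one_pos⟩

section helpers

lemma semiconj_zpow' {α β : Type*} (e : Equiv.Perm α) (f : Equiv.Perm β) (φ : α → β)
    (h : ∀ x, φ (e x) = f (φ x)) : ∀ (n : ℤ) (x : α), φ ((e ^ n) x) = (f ^ n) (φ x) := by
  have hinv : ∀ x, φ (e⁻¹ x) = f⁻¹ (φ x) := by
    intro x
    have := h (e⁻¹ x)
    simp only [Equiv.Perm.inv_def, Equiv.apply_symm_apply] at this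
    rw [this]; simp
  intro n
  induction n using Int.induction_on with
  | zero => simp
  | succ k ih =>
      intro x
      have : (e ^ ((k : ℤ) + 1)) x = (e ^ (k : ℤ)) (e x) := by
        rw [zpow_add_one, Equiv.Perm.mul_apply]
      rw [this, ih, h, ← Equiv.Perm.mul_apply, ← zpow_add_one]
  | pred k ih =>
      intro x
      have : (e ^ ((-k : ℤ) - 1)) x = (e ^ (-k : ℤ)) (e⁻¹ x) := by
        rw [zpow_sub_one, Equiv.Perm.mul_apply]
      rw [this, ih, hinv, ← Equiv.Perm.mul_apply, ← zpow_sub_one]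

instance unitAddCircle_prob : IsProbabilityMeasure (volume : Measure (AddCircle (1:ℝ))) := by
  constructor; simp [AddCircle.measure_univ]

end helpers

/-- Auxiliary structure: a tower system over `(X, μ, T)` whose top circle coordinate moves
along a polynomial of degree `k` with leading coefficient `s / k!`. -/
structure WWSys {X : Type u} [MeasurableSpace X] (μ : Measure X) (T : X ≃ᵐ X) (s : ℝ)
    (k : ℕ) : Type (u + 1) where
  Ω : Type u
  inst : MeasurableSpace Ω
  ν : @Measure Ω inst
  prob : IsProbabilityMeasure ν
  S : @MeasurableEquiv Ω Ω inst inst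
  mp : @MeasurePreserving Ω Ω inst inst S ν ν
  top : Ω → AddCircle (1:ℝ)
  topMeas : @Measurable _ _ inst _ top
  proj : Ω → X
  projMeas : @Measurable _ _ inst _ proj
  projS : ∀ ω, proj (S ω) = T (proj ω)
  lift : ∀ (Pr : Ω → Prop), (∀ᵐ ω ∂ν, Pr ω) → ∀ᵐ x ∂μ, ∃ ω, proj ω = x ∧ Pr ω
  orbit : ∀ ω, ∃ P : Polynomial ℝ, P.degree ≤ (k : ℕ) ∧ P.coeff k = s / k.factorial ∧
    ∀ n : ℤ, top ((S.toEquiv ^ n) ω) = ((P.eval (n : ℝ) : ℝ) : AddCircle (1:ℝ))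

variable {X : Type u} [MeasurableSpace X] {μ : Measure X} {T : X ≃ᵐ X} {s : ℝ} {k : ℕ}

/-- The base system: `X` itself, with constant "top" coordinate `s`. -/
noncomputable def wwBase [IsProbabilityMeasure μ] (hT : MeasurePreserving T μ μ) (s : ℝ) :
    WWSys μ T s 0 where
  Ω := X
  inst := ‹_›
  ν := μ
  prob := ‹_›
  S := T
  mp := hT
  top := fun _ => ((s : ℝ) : AddCircle (1:ℝ))
  topMeas := measurable_const
  proj := id
  projMeas := measurable_id
  projS := fun _ => by rfl
  lift := fun _ h => by filter_upwards [h] with x hx; exact ⟨x, rfl, hx⟩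
  orbit := fun _ => ⟨Polynomial.C s, Polynomial.degree_C_le, by simp,
    fun n => by simp⟩

/-- Discrete antiderivative of a real polynomial, with control on degree and leading coeff. -/
lemma discrete_antideriv : ∀ (k : ℕ) (P : Polynomial ℝ), P.degree ≤ (k : ℕ) →
    ∃ Q : Polynomial ℝ, Q.degree ≤ ((k + 1 : ℕ) : WithBot ℕ) ∧
      Q.coeff (k + 1) = P.coeff k / (k + 1) ∧
      ∀ x : ℝ, Q.eval (x + 1) - Q.eval x = P.eval x := by
  intro k
  induction k with
  | zero =>
      intro P hP
      have hPC : P = C (P.coeff 0) := Polynomial.eq_C_of_degree_le_zero (by exact_mod_cast hP)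
      refine ⟨C (P.coeff 0) * X, ?_, ?_, ?_⟩
      · exact (Polynomial.degree_C_mul_X_le _).trans (by norm_num)
      · simp
      · intro x
        conv_rhs => rw [hPC]
        simp; ring
  | succ k ih =>
      intro P hP
      set c : ℝ := P.coeff (k + 1) with hc
      set W : Polynomial ℝ := (X + 1) ^ (k + 2) - X ^ (k + 2) with hWdef
      have hWc : ∀ j : ℕ, W.coeff j
          = ((k + 2).choose j : ℝ) - (if k + 2 = j then 1 else 0) := by
        intro j
        simp [hWdef, Polynomial.coeff_sub, Polynomial.coeff_X_add_one_pow,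
          Polynomial.coeff_X_pow, eq_comm]
      set E : Polynomial ℝ := P - C (c / (k + 2)) * W with hEdef
      have hk2 : ((k : ℝ) + 2) ≠ 0 := by positivity
      have hE : E.degree ≤ (k : ℕ) := by
        rw [Polynomial.degree_le_iff_coeff_zero]
        intro j hj
        have hj' : k < j := by exact_mod_cast hj
        have hEj : E.coeff j = P.coeff j - c / (k + 2) * W.coeff j := by
          simp [hEdef, Polynomial.coeff_sub, Polynomial.coeff_C_mul]
        rcases lt_or_ge j (k + 2) with hjk | hjk
        · -- j = k + 1
          have hjeq : j = k + 1 := by omega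
          subst hjeq
          rw [hEj, hWc]
          simp only [if_neg (by omega : ¬ k + 2 = k + 1)]
          rw [Nat.choose_succ_self_right]
          push_cast
          field_simp
          rw [← hc]; ring
        · -- j ≥ k + 2
          have hPj : P.coeff j = 0 := by
            apply Polynomial.coeff_eq_zero_of_degree_lt
            refine lt_of_le_of_lt hP ?_
            exact_mod_cast (by omega : k + 1 < j)
          rcases eq_or_lt_of_le hjk with hjeq | hjlt
          · rw [hEj, hWc, hPj, ← hjeq]
            simp
          · rw [hEj, hWc, hPj, Nat.choose_eq_zero_of_lt hjlt,
              if_neg (by omega : ¬ k + 2 = j)]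
            simp
      obtain ⟨QE, hQEdeg, _, hQEeval⟩ := ih E hE
      refine ⟨QE + C (c / (k + 2)) * X ^ (k + 2), ?_, ?_, ?_⟩
      · refine (Polynomial.degree_add_le _ _).trans (max_le ?_ ?_)
        · exact hQEdeg.trans (by exact_mod_cast (by omega : k + 1 ≤ k + 2))
        · exact (Polynomial.degree_C_mul_X_pow_le _ _)
      · have h1 : QE.coeff (k + 2) = 0 := by
          apply Polynomial.coeff_eq_zero_of_degree_lt
          exact lt_of_le_of_lt hQEdeg (by exact_mod_cast (by omega : k + 1 < k + 2))
        rw [Polynomial.coeff_add, h1, Polynomial.coeff_C_mul, Polynomial.coeff_X_pow]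
        simp [hc]
        push_cast
        ring
      · intro x
        have hEeval : E.eval x = P.eval x - c / (k + 2) * W.eval x := by
          simp [hEdef]
        have := hQEeval x
        simp only [Polynomial.eval_add, Polynomial.eval_mul, Polynomial.eval_C,
          Polynomial.eval_pow, Polynomial.eval_X]
        rw [hEeval] at this
        have hWeval : W.eval x = (x + 1) ^ (k + 2) - x ^ (k + 2) := by
          simp [hWdef]
        rw [hWeval] at this
        nlinarith [this]

/-- The step: extend a tower system by one circle coordinate. -/
noncomputable def wwStep [IsProbabilityMeasure μ] (Z : WWSys μ T s k) :
    WWSys μ T s (k + 1) :=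
  letI := Z.inst
  haveI := Z.prob
  letI E : Z.Ω × AddCircle (1:ℝ) ≃ᵐ Z.Ω × AddCircle (1:ℝ) :=
    { toEquiv :=
        { toFun := fun p => (Z.S p.1, p.2 + Z.top p.1)
          invFun := fun p => (Z.S.symm p.1, p.2 - Z.top (Z.S.symm p.1))
          left_inv := by rintro ⟨ω, θ⟩; simp
          right_inv := by rintro ⟨ω, θ⟩; simp }
      measurable_toFun := by
        exact ((Z.S.measurable.comp measurable_fst).prodMk
          (measurable_snd.add (Z.topMeas.comp measurable_fst)))
      measurable_invFun := by
        exact ((Z.S.symm.measurable.comp measurable_fst).prodMk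
          (measurable_snd.sub
            (Z.topMeas.comp (Z.S.symm.measurable.comp measurable_fst)))) }
  { Ω := Z.Ω × AddCircle (1:ℝ)
    inst := inferInstance
    ν := Z.ν.prod volume
    prob := inferInstance
    S := E
    mp := by
      have hmp : MeasurePreserving (fun p : Z.Ω × AddCircle (1:ℝ) =>
          (Z.S p.1, p.2 + Z.top p.1)) (Z.ν.prod volume) (Z.ν.prod volume) :=
        Z.mp.skew_product (g := fun ω θ => θ + Z.top ω)
          (measurable_snd.add (Z.topMeas.comp measurable_fst))
          (Filter.Eventually.of_forall fun ω =>
            (measurePreserving_add_right volume (Z.top ω)).map_eq)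
      exact hmp
    top := Prod.snd
    topMeas := measurable_snd
    proj := fun p => Z.proj p.1
    projMeas := Z.projMeas.comp measurable_fst
    projS := fun p => Z.projS p.1
    lift := by
      intro Pr h
      have h2 := MeasureTheory.Measure.ae_ae_of_ae_prod h
      have h3 := Z.lift (fun ω => ∀ᵐ θ : AddCircle (1:ℝ) ∂volume, Pr (ω, θ)) h2
      refine h3.mono ?_
      rintro x ⟨ω, hproj, hae⟩
      obtain ⟨θ, hθ⟩ := hae.exists
      exact ⟨(ω, θ), hproj, hθ⟩
    orbit := by
      rintro ⟨ω, θ⟩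
      obtain ⟨P, hPdeg, hPcoeff, hPorb⟩ := Z.orbit ω
      obtain ⟨Q0, hQ0deg, hQ0coeff, hQ0eval⟩ := discrete_antideriv k P hPdeg
      induction θ using QuotientAddGroup.induction_on with
      | H r =>
      refine ⟨Polynomial.C (r - Q0.eval 0) + Q0, ?_, ?_, ?_⟩
      · refine (Polynomial.degree_add_le _ _).trans (max_le ?_ hQ0deg)
        exact Polynomial.degree_C_le.trans (by exact_mod_cast bot_le.trans bot_le)
      · rw [Polynomial.coeff_add, Polynomial.coeff_C,
          if_neg (by omega : ¬ k + 1 = 0), hQ0coeff, hPcoeff, Nat.factorial_succ]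
        push_cast
        rw [zero_add, div_div, mul_comm]
      · -- the orbit identity, by two-sided induction on n
        have hfst : ∀ (n : ℤ) (p : Z.Ω × AddCircle (1:ℝ)),
            ((E.toEquiv ^ n) p).1 = (Z.S.toEquiv ^ n) p.1 :=
          fun n p => semiconj_zpow' E.toEquiv Z.S.toEquiv Prod.fst (fun _ => rfl) n p
        have hsucc : ∀ (n : ℤ) (p : Z.Ω × AddCircle (1:ℝ)),
            (E.toEquiv ^ (n + 1)) p = E.toEquiv ((E.toEquiv ^ n) p) := by
          intro n p
          rw [add_comm, zpow_add, zpow_one, Equiv.Perm.mul_apply]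
        have hpred : ∀ (n : ℤ) (p : Z.Ω × AddCircle (1:ℝ)),
            (E.toEquiv ^ (n - 1)) p = E.toEquiv.symm ((E.toEquiv ^ n) p) := by
          intro n p
          rw [show n - 1 = -1 + n by ring, zpow_add, zpow_neg_one, Equiv.Perm.mul_apply,
            Equiv.Perm.inv_def]
        have hQdiff : ∀ x : ℝ,
            (Polynomial.C (r - Q0.eval 0) + Q0).eval (x + 1)
              - (Polynomial.C (r - Q0.eval 0) + Q0).eval x = P.eval x := by
          intro x
          simp only [Polynomial.eval_add, Polynomial.eval_C]
          have := hQ0eval x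
          linarith
        have step1 : ∀ q : Z.Ω × AddCircle (1:ℝ),
            Prod.snd (E.toEquiv q) = q.2 + Z.top q.1 := fun _ => rfl
        have step2 : ∀ q : Z.Ω × AddCircle (1:ℝ),
            Prod.snd (E.toEquiv.symm q) = q.2 - Z.top (Z.S.symm q.1) := fun _ => rfl
        have hfst1 : ∀ q : Z.Ω × AddCircle (1:ℝ), (E.toEquiv q).1 = Z.S q.1 := fun _ => rfl
        intro n
        induction n using Int.induction_on with
        | zero =>
            simp only [zpow_zero, Equiv.Perm.one_apply]
            show (r : AddCircle (1:ℝ)) = _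
            congr 1
            simp
        | succ j ih =>
            rw [hsucc, step1, hfst, ih, hPorb j, ← AddCircle.coe_add]
            congr 1
            have := hQdiff (j : ℝ)
            push_cast
            linarith
        | pred j ih =>
            rw [show (-(j:ℤ) - 1) = (-(j:ℤ) - 1 + 1) - 1 by ring, hpred,
              show (-(j:ℤ) - 1 + 1) = -(j:ℤ) by ring, step2, hfst, ih]
            have hsymmfst : Z.S.symm ((Z.S.toEquiv ^ (-(j:ℤ))) ω)
                = (Z.S.toEquiv ^ (-(j:ℤ) - 1)) ω := by
              have h9 : (Z.S.toEquiv ^ (-(j:ℤ) - 1)) ω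
                  = Z.S.toEquiv.symm ((Z.S.toEquiv ^ (-(j:ℤ))) ω) := by
                rw [show -(j:ℤ) - 1 = -1 + -(j:ℤ) by ring, zpow_add, zpow_neg_one,
                  Equiv.Perm.mul_apply, Equiv.Perm.inv_def]
              rw [h9]; rfl
            rw [hsymmfst, hPorb, ← AddCircle.coe_sub]
            congr 1
            have := hQdiff (-(j:ℝ) - 1)
            rw [show -(j:ℝ) - 1 + 1 = -(j:ℝ) by ring] at this
            push_cast at this ⊢
            linarith }

/-- The full tower. -/
noncomputable def wwTower [IsProbabilityMeasure μ] (hT : MeasurePreserving T μ μ) (s : ℝ) :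
    ∀ k : ℕ, WWSys μ T s k
  | 0 => wwBase hT s
  | (k + 1) => wwStep (wwTower hT s k)

lemma comp_linear_coeff (P : Polynomial ℝ) (b : ℝ) (j : ℕ) :
    (P.comp (C b * Polynomial.X)).coeff j = P.coeff j * b ^ j := by
  induction P using Polynomial.induction_on' with
  | add p q hp hq => simp [Polynomial.add_comp, hp, hq, add_mul]
  | monomial n a =>
      rw [Polynomial.monomial_comp, mul_pow, ← Polynomial.C_pow,
        Polynomial.coeff_C_mul, Polynomial.coeff_C_mul, Polynomial.coeff_X_pow,
        Polynomial.coeff_monomial]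
      rcases eq_or_ne n j with rfl | hnj
      · simp
      · simp [hnj, Ne.symm hnj]

/-- Integer powers of a measure preserving measurable equivalence are measure preserving. -/
lemma mp_zpow {α : Type*} [MeasurableSpace α] {μ : Measure α} (T : α ≃ᵐ α)
    (hT : MeasurePreserving T μ μ) : ∀ n : ℤ, MeasurePreserving (fun x => (T.toEquiv ^ n) x) μ μ := by
  have hsymm : MeasurePreserving (T.symm) μ μ := hT.symm T
  intro n
  induction n using Int.induction_on with
  | zero => simp only [zpow_zero, Equiv.Perm.one_apply]; exact MeasurePreserving.id μ
  | succ k ih =>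
      have : (fun x => (T.toEquiv ^ ((k : ℤ) + 1)) x)
          = (fun x => (T.toEquiv ^ (k : ℤ)) x) ∘ (fun x => T x) := by
        funext x; rw [zpow_add_one, Equiv.Perm.mul_apply]; rfl
      rw [this]; exact ih.comp hT
  | pred k ih =>
      have : (fun x => (T.toEquiv ^ (-(k : ℤ) - 1)) x)
          = (fun x => (T.toEquiv ^ (-(k : ℤ))) x) ∘ (fun x => T.symm x) := by
        funext x; rw [zpow_sub_one, Equiv.Perm.mul_apply]; rfl
      rw [this]; exact ih.comp hsymm

lemma exists_bounded_version {Y : Type u} [MeasurableSpace Y] {μ : Measure Y} {f : Y → ℂ}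
    (hf : MemLp f ⊤ μ) : ∃ g : Y → ℂ, Measurable g ∧ (∃ C, ∀ x, ‖g x‖ ≤ C) ∧ f =ᵐ[μ] g := by
  have hmeas := hf.aestronglyMeasurable
  set g0 := hmeas.mk f with hg0
  have hg0m : Measurable g0 := hmeas.stronglyMeasurable_mk.measurable
  have heq : f =ᵐ[μ] g0 := hmeas.ae_eq_mk
  set C := (eLpNormEssSup f μ).toReal with hC
  have hCtop : eLpNormEssSup f μ ≠ ⊤ := by
    have h2 := hf.2
    rw [eLpNorm_exponent_top] at h2
    exact h2.ne
  have hbd : ∀ᵐ x ∂μ, ‖f x‖ ≤ C := by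
    filter_upwards [ae_le_eLpNormEssSup (f := f) (μ := μ)] with x hx
    calc ‖f x‖ = ((‖f x‖₊ : ENNReal)).toReal := by simp
    _ ≤ C := ENNReal.toReal_mono hCtop hx
  refine ⟨fun x => if ‖g0 x‖ ≤ C then g0 x else 0, ?_, ⟨max C 0, ?_⟩, ?_⟩
  · exact Measurable.ite (measurableSet_le hg0m.norm measurable_const) hg0m measurable_const
  · intro x
    dsimp only
    split
    · exact le_max_of_le_left ‹_›
    · simp
  · filter_upwards [heq, hbd] with x hx hb
    have hg0b : ‖g0 x‖ ≤ C := by rw [← hx]; exact hb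
    rw [if_pos hg0b]
    exact hx

/-- Main auxiliary statement, assuming `b ≠ 0`. -/
theorem wwAux (m : ℕ)
    (hyp : ∀ (Ω : Type u) [MeasurableSpace Ω] (ν : Measure Ω) [IsProbabilityMeasure ν]
      (S : Ω ≃ᵐ Ω), MeasurePreserving S ν ν →
        ∀ (G1 G2 : Ω → ℂ), Measurable G1 → Measurable G2 →
          (∃ C : ℝ, ∀ ω, ‖G1 ω‖ ≤ C) → (∃ C : ℝ, ∀ ω, ‖G2 ω‖ ≤ C) →
            ∀ a b : ℤ, ∃ V : Set Ω, MeasurableSet V ∧ ν V = 1 ∧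
              ∀ ω ∈ V, ∀ q : Polynomial ℝ, q.degree ≤ (m : ℕ) → ∃ L : ℂ,
                Tendsto (fun N : ℕ => (N : ℂ)⁻¹ * ∑ n ∈ Finset.Icc 1 N,
                    G1 ((S.toEquiv ^ (a * (n : ℤ))) ω) * G2 ((S.toEquiv ^ (b * (n : ℤ))) ω) *
                      Complex.exp (2 * Real.pi * Complex.I * (q.eval (n : ℝ))))
                  atTop (nhds L))
    (X : Type u) [MeasurableSpace X] (μ : Measure X) [IsProbabilityMeasure μ]
    (T : X ≃ᵐ X) (hT : MeasurePreserving T μ μ)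
    (f1 f2 : X → ℂ) (hf1 : MemLp f1 ⊤ μ) (hf2 : MemLp f2 ⊤ μ)
    (a b : ℤ) (hb : b ≠ 0) (t : ℝ) :
    ∀ᵐ x ∂μ, ∃ L : ℂ,
      Tendsto (fun N : ℕ => (N : ℂ)⁻¹ * ∑ n ∈ Finset.Icc 1 N,
          f1 ((T.toEquiv ^ (a * (n : ℤ))) x) * f2 ((T.toEquiv ^ (b * (n : ℤ))) x) *
            Complex.exp (2 * Real.pi * Complex.I * ((n : ℝ) ^ (m + 1)) * t))
        atTop (nhds L) := by
  obtain ⟨g1, hg1m, ⟨C1, hC1⟩, hg1ae⟩ := exists_bounded_version hf1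
  obtain ⟨g2, hg2m, ⟨C2, hC2⟩, hg2ae⟩ := exists_bounded_version hf2
  set s : ℝ := t * (m + 1).factorial / (b : ℝ) ^ (m + 1) with hs
  set Z := wwTower (μ := μ) (T := T) hT s (m + 1) with hZ
  letI := Z.inst
  haveI := Z.prob
  set χ : AddCircle (1:ℝ) → ℂ := fun θ => (AddCircle.toCircle θ : ℂ) with hχ
  have hχm : Measurable χ :=
    (continuous_induced_dom.comp AddCircle.continuous_toCircle).measurable
  have hχnorm : ∀ θ, ‖χ θ‖ = 1 := fun θ => by simp [hχ, Circle.norm_coe]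
  set G1 : Z.Ω → ℂ := fun ω => g1 (Z.proj ω) with hG1
  set G2 : Z.Ω → ℂ := fun ω => g2 (Z.proj ω) * χ (Z.top ω) with hG2
  obtain ⟨V, hVm, hV1, hVconv⟩ := hyp Z.Ω Z.ν Z.S Z.mp G1 G2
    (hg1m.comp Z.projMeas) ((hg2m.comp Z.projMeas).mul (hχm.comp Z.topMeas))
    ⟨C1, fun ω => hC1 _⟩
    ⟨C2, fun ω => by rw [hG2]; simp only [norm_mul]; rw [hχnorm, mul_one]; exact hC2 _⟩
    a b
  have hVae : ∀ᵐ ω ∂Z.ν, ω ∈ V := by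
    have hc : Z.ν Vᶜ = 0 := by
      rw [measure_compl hVm (measure_ne_top _ _), hV1, measure_univ]
      simp
    rw [MeasureTheory.ae_iff]
    exact hc
  have hlift := Z.lift (fun ω => ω ∈ V) hVae
  have htrans : ∀ᵐ x ∂μ, ∀ n : ℤ,
      f1 ((T.toEquiv ^ n) x) = g1 ((T.toEquiv ^ n) x) ∧
      f2 ((T.toEquiv ^ n) x) = g2 ((T.toEquiv ^ n) x) := by
    rw [MeasureTheory.ae_all_iff]
    intro n
    have h1 := (mp_zpow T hT n).quasiMeasurePreserving.ae_eq hg1ae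
    have h2 := (mp_zpow T hT n).quasiMeasurePreserving.ae_eq hg2ae
    filter_upwards [h1, h2] with x e1 e2
    exact ⟨e1, e2⟩
  filter_upwards [hlift, htrans] with x hx heq
  obtain ⟨ω, hproj, hωV⟩ := hx
  obtain ⟨P, hPdeg, hPcoeff, hPorb⟩ := Z.orbit ω
  set q : Polynomial ℝ := Polynomial.C t * Polynomial.X ^ (m + 1)
    - P.comp (Polynomial.C (b : ℝ) * Polynomial.X) with hq
  have hbR : ((b : ℝ)) ^ (m + 1) ≠ 0 := pow_ne_zero _ (by exact_mod_cast hb)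
  have hfac : (((m + 1).factorial : ℝ)) ≠ 0 := by exact_mod_cast (m + 1).factorial_ne_zero
  have hqc : ∀ j, q.coeff j = (if j = m + 1 then t else 0) - P.coeff j * (b : ℝ) ^ j := by
    intro j
    rw [hq, Polynomial.coeff_sub, comp_linear_coeff, Polynomial.coeff_C_mul,
      Polynomial.coeff_X_pow]
    congr 1
    split <;> simp
  have hqdeg : q.degree ≤ (m : ℕ) := by
    rw [Polynomial.degree_le_iff_coeff_zero]
    intro j hj
    have hj' : m < j := by exact_mod_cast hj
    rw [hqc]
    rcases eq_or_ne j (m + 1) with rfl | hne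
    · rw [if_pos rfl, hPcoeff, hs]
      field_simp
      ring
    · have hPj : P.coeff j = 0 := Polynomial.coeff_eq_zero_of_degree_lt
        (lt_of_le_of_lt hPdeg (by exact_mod_cast (by omega : m + 1 < j)))
      rw [if_neg hne, hPj]
      ring
  obtain ⟨L, hL⟩ := hVconv ω hωV q hqdeg
  refine ⟨L, hL.congr ?_⟩
  intro N
  congr 1
  apply Finset.sum_congr rfl
  intro n _
  have hproj_z := semiconj_zpow' Z.S.toEquiv T.toEquiv Z.proj (fun y => Z.projS y)
  have e1 : G1 ((Z.S.toEquiv ^ (a * (n : ℤ))) ω) = f1 ((T.toEquiv ^ (a * (n : ℤ))) x) := by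
    rw [hG1]
    show g1 (Z.proj _) = _
    rw [hproj_z, hproj]
    exact ((heq (a * (n : ℤ))).1).symm
  have e2 : G2 ((Z.S.toEquiv ^ (b * (n : ℤ))) ω) = f2 ((T.toEquiv ^ (b * (n : ℤ))) x) *
      Complex.exp (2 * Real.pi * Complex.I * (P.eval (((b * (n : ℤ) : ℤ)) : ℝ))) := by
    rw [hG2]
    show g2 (Z.proj _) * χ (Z.top _) = _
    rw [hproj_z, hproj, hPorb (b * (n : ℤ))]
    congr 1
    · exact ((heq (b * (n : ℤ))).2).symm
    · rw [hχ]
      show ((AddCircle.toCircle ((P.eval (((b * (n : ℤ) : ℤ)) : ℝ) : ℝ) : AddCircle (1:ℝ))) : ℂ) = _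
      rw [AddCircle.toCircle_apply_mk, Circle.coe_exp]
      push_cast
      ring_nf
  have hqeval : q.eval (n : ℝ) = t * (n : ℝ) ^ (m + 1) - P.eval ((b : ℝ) * (n : ℝ)) := by
    rw [hq]
    simp [Polynomial.eval_comp]
  rw [e1, e2, hqeval]
  have key : ∀ (u v A B C : ℂ), A + B = C →
      u * (v * Complex.exp A) * Complex.exp B = u * v * Complex.exp C := by
    intro u v A B C h
    rw [← h, Complex.exp_add]
    ring
  apply key
  push_cast
  ring

/-- Inductive step: let `m ≥ 1`. If the Wiener-Wintner double recurrence theorem holds for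
polynomial weights of degree at most `m` (for every invertible measure-preserving system and
bounded measurable `G1, G2` there is a full-measure set on which
`(1/N) ∑_{n=1}^N G1(S^{an}ω) G2(S^{bn}ω) e^{2πi q(n)}` converges for every real polynomial `q`
of degree at most `m`), then for any invertible measure-preserving system, `f1, f2 ∈ L^∞(μ)`,
integers `a ≠ b` and any `t ∈ ℝ`, the averages
`(1/N) ∑_{n=1}^N f1(T^{an}x) f2(T^{bn}x) e^{2πi n^{m+1} t}` converge μ-a.e. -/
theorem wiener_wintner_monomial_succ_of_deg_le
    (m : ℕ) (hm : 1 ≤ m)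
    (hyp : ∀ (Ω : Type u) [MeasurableSpace Ω] (ν : Measure Ω) [IsProbabilityMeasure ν]
      (S : Ω ≃ᵐ Ω), MeasurePreserving S ν ν →
        ∀ (G1 G2 : Ω → ℂ), Measurable G1 → Measurable G2 →
          (∃ C : ℝ, ∀ ω, ‖G1 ω‖ ≤ C) → (∃ C : ℝ, ∀ ω, ‖G2 ω‖ ≤ C) →
            ∀ a b : ℤ, ∃ V : Set Ω, MeasurableSet V ∧ ν V = 1 ∧
              ∀ ω ∈ V, ∀ q : Polynomial ℝ, q.degree ≤ (m : ℕ) → ∃ L : ℂ,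
                Tendsto (fun N : ℕ => (N : ℂ)⁻¹ * ∑ n ∈ Finset.Icc 1 N,
                    G1 ((S.toEquiv ^ (a * (n : ℤ))) ω) * G2 ((S.toEquiv ^ (b * (n : ℤ))) ω) *
                      Complex.exp (2 * Real.pi * Complex.I * (q.eval (n : ℝ))))
                  atTop (nhds L)) :
    ∀ (X : Type u) [MeasurableSpace X] (μ : Measure X) [IsProbabilityMeasure μ]
      (T : X ≃ᵐ X), MeasurePreserving T μ μ →
        ∀ (f1 f2 : X → ℂ), MemLp f1 ⊤ μ → MemLp f2 ⊤ μ →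
          ∀ (a b : ℤ), a ≠ b → ∀ (t : ℝ),
            ∀ᵐ x ∂μ, ∃ L : ℂ,
              Tendsto (fun N : ℕ => (N : ℂ)⁻¹ * ∑ n ∈ Finset.Icc 1 N,
                  f1 ((T.toEquiv ^ (a * (n : ℤ))) x) * f2 ((T.toEquiv ^ (b * (n : ℤ))) x) *
                    Complex.exp (2 * Real.pi * Complex.I * ((n : ℝ) ^ (m + 1)) * t))
                atTop (nhds L) := by
  intro X _ μ _ T hT f1 f2 hf1 hf2 a b hab t
  rcases eq_or_ne b 0 with rfl | hb
  · have ha : a ≠ 0 := hab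
    have h := wwAux m hyp X μ T hT f2 f1 hf2 hf1 0 a ha t
    refine h.mono ?_
    rintro x ⟨L, hL⟩
    refine ⟨L, hL.congr ?_⟩
    intro N
    congr 1
    apply Finset.sum_congr rfl
    intro n _
    ring
  · exact wwAux m hyp X μ T hT f1 f2 hf1 hf2 a b hb t
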